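/- For every real t > 0 and every real j ≥ 0, ∫₀^{t} s^{−1/2} · exp( −j²/(2s) ) ds = 2√t · exp( −j²/(2t) ) − 2j · ∫_{j/√t}^{∞} exp(−u²/2) du. -/

import Mathlib

open Real MeasureTheory Set Filter

-- g integrable
lemma gauss_integrable : MeasureTheory.Integrable (fun u : ℝ => Real.exp (-u ^ 2 / 2)) := by
  have := integrable_exp_neg_mul_sq (by norm_num : (0:ℝ) < 1/2)
  convert this using 2 with x
  ring_nf

lemma tail_eq (x : ℝ) (hx : 0 ≤ x) :
    ∫ u in Set.Ioi x, Real.exp (-u ^ 2 / 2)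
      = (∫ u in Set.Ioi (0:ℝ), Real.exp (-u ^ 2 / 2)) - ∫ u in (0:ℝ)..x, Real.exp (-u ^ 2 / 2) := by
  have h := MeasureTheory.setIntegral_union (Set.Ioc_disjoint_Ioi le_rfl)
    measurableSet_Ioi (gauss_integrable.integrableOn (s := Set.Ioc 0 x))
    (gauss_integrable.integrableOn (s := Set.Ioi x))
  rw [Set.Ioc_union_Ioi_eq_Ioi hx] at h
  rw [intervalIntegral.integral_of_le hx, MeasureTheory.integral_Ioc_eq_integral_Ioo] at *
  rw [h]
  ring

lemma tail_tendsto :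
    Filter.Tendsto (fun x => ∫ u in Set.Ioi x, Real.exp (-u ^ 2 / 2)) atTop (nhds 0) := by
  have h1 := MeasureTheory.intervalIntegral_tendsto_integral_Ioi 0
    (gauss_integrable.integrableOn) (tendsto_id (α := ℝ))
  have h2 := (tendsto_const_nhds (x := ∫ u in Set.Ioi (0:ℝ), Real.exp (-u ^ 2 / 2))
    (f := atTop)).sub h1
  rw [sub_self] at h2
  apply Filter.Tendsto.congr' _ h2
  filter_upwards [eventually_ge_atTop (0:ℝ)] with x hx
  exact (tail_eq x hx).symm

lemma f_meas (j : ℝ) : Measurable (fun s : ℝ => (Real.sqrt s)⁻¹ * Real.exp (-j ^ 2 / (2 * s))) := by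
  exact (Real.continuous_sqrt.measurable.inv).mul
    ((measurable_const.div ((measurable_const.mul measurable_id))).exp)

lemma f_bound (j : ℝ) {s : ℝ} (hs : 0 < s) :
    (Real.sqrt s)⁻¹ * Real.exp (-j ^ 2 / (2 * s)) ≤ s ^ (-(1/2) : ℝ) := by
  have h1 : Real.exp (-j ^ 2 / (2 * s)) ≤ 1 := by
    rw [Real.exp_le_one_iff]
    exact div_nonpos_of_nonpos_of_nonneg (neg_nonpos.mpr (sq_nonneg j)) (by positivity)
  have h2 : (Real.sqrt s)⁻¹ = s ^ (-(1/2) : ℝ) := by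
    rw [Real.sqrt_eq_rpow, ← Real.rpow_neg hs.le]
  calc (Real.sqrt s)⁻¹ * Real.exp (-j ^ 2 / (2 * s)) ≤ (Real.sqrt s)⁻¹ * 1 := by
        apply mul_le_mul_of_nonneg_left h1 (by positivity)
    _ = s ^ (-(1/2) : ℝ) := by rw [mul_one, h2]

lemma f_intble (j t : ℝ) (ht : 0 ≤ t) :
    IntervalIntegrable (fun s : ℝ => (Real.sqrt s)⁻¹ * Real.exp (-j ^ 2 / (2 * s)))
      MeasureTheory.volume 0 t := by
  have hφ : IntervalIntegrable (fun s : ℝ => s ^ (-(1/2) : ℝ)) MeasureTheory.volume 0 t :=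
    intervalIntegral.intervalIntegrable_rpow' (by norm_num)
  apply hφ.mono_fun ((f_meas j).aestronglyMeasurable)
  rw [Filter.EventuallyLE, ae_restrict_iff' measurableSet_uIoc]
  filter_upwards with s hs
  rw [Set.uIoc_of_le ht] at hs
  have hs0 : 0 < s := hs.1
  rw [Real.norm_eq_abs, Real.norm_eq_abs, abs_of_nonneg (by positivity),
    abs_of_nonneg (by positivity)]
  exact f_bound j hs0

lemma rpow_int (ε : ℝ) :
    ∫ s in (0:ℝ)..ε, s ^ (-(1/2) : ℝ) = 2 * Real.sqrt ε := by
  rw [integral_rpow (Or.inl (by norm_num))]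
  rw [Real.zero_rpow (by norm_num), Real.sqrt_eq_rpow]
  norm_num
  ring

lemma gauss_cont : Continuous (fun u : ℝ => Real.exp (-u ^ 2 / 2)) := by fun_prop

lemma F_deriv (j s : ℝ) (hs : 0 < s) :
    HasDerivAt (fun s => 2 * Real.sqrt s * Real.exp (-j ^ 2 / (2 * s))
        + 2 * j * ∫ u in (0:ℝ)..(j / Real.sqrt s), Real.exp (-u ^ 2 / 2))
      ((Real.sqrt s)⁻¹ * Real.exp (-j ^ 2 / (2 * s))) s := by
  have hsne : Real.sqrt s ≠ 0 := by positivity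
  have hss : Real.sqrt s * Real.sqrt s = s := Real.mul_self_sqrt hs.le
  have h1 : HasDerivAt Real.sqrt (1 / (2 * Real.sqrt s)) s := Real.hasDerivAt_sqrt hs.ne'
  have h2 : HasDerivAt (fun y : ℝ => -j ^ 2 / (2 * y)) (-j ^ 2 / 2 * (-(s ^ 2)⁻¹)) s := by
    have := (hasDerivAt_inv hs.ne').const_mul (-j ^ 2 / 2)
    apply this.congr_of_eventuallyEq
    filter_upwards with y
    rw [div_eq_mul_inv, mul_inv, ← mul_assoc, ← div_eq_mul_inv]
    ring
  have h3 := h2.exp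
  have hprod := (h1.const_mul 2).mul h3
  have hinv := h1.inv hsne
  have hinner : HasDerivAt (fun y : ℝ => j / Real.sqrt y)
      (j * (-(1 / (2 * Real.sqrt s)) / Real.sqrt s ^ 2)) s := by
    have := hinv.const_mul j
    apply this.congr_of_eventuallyEq
    filter_upwards with y
    rw [div_eq_mul_inv]
    rfl
  have hG : HasDerivAt (fun x : ℝ => ∫ u in (0:ℝ)..x, Real.exp (-u ^ 2 / 2))
      (Real.exp (-(j / Real.sqrt s) ^ 2 / 2)) (j / Real.sqrt s) :=
    intervalIntegral.integral_hasDerivAt_right (gauss_cont.intervalIntegrable _ _)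
      (gauss_cont.stronglyMeasurableAtFilter _ _) gauss_cont.continuousAt
  have hcomp := (hG.comp s hinner).const_mul (2 * j)
  have htot := hprod.add hcomp
  have hsq : -(j / Real.sqrt s) ^ 2 / 2 = -j ^ 2 / (2 * s) := by
    rw [div_pow, Real.sq_sqrt hs.le]
    ring
  rw [hsq] at htot
  refine htot.congr_deriv ?_
  symm
  have hs2 : Real.sqrt s ^ 2 = s := Real.sq_sqrt hs.le
  field_simp
  ring_nf
  rw [show Real.sqrt s ^ 4 = (Real.sqrt s ^ 2) ^ 2 by ring, hs2]
  ring

lemma f_nonneg (j s : ℝ) : 0 ≤ (Real.sqrt s)⁻¹ * Real.exp (-j ^ 2 / (2 * s)) := by positivity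

lemma small_int (j : ℝ) :
    Filter.Tendsto (fun ε => ∫ s in (0:ℝ)..ε, (Real.sqrt s)⁻¹ * Real.exp (-j ^ 2 / (2 * s)))
      (nhdsWithin 0 (Set.Ioi 0)) (nhds 0) := by
  have hsq : Filter.Tendsto (fun ε : ℝ => 2 * Real.sqrt ε) (nhdsWithin 0 (Set.Ioi 0)) (nhds 0) := by
    have : Filter.Tendsto (fun ε : ℝ => 2 * Real.sqrt ε) (nhds 0) (nhds (2 * Real.sqrt 0)) :=
      (continuous_const.mul Real.continuous_sqrt).continuousAt
    simpa using this.mono_left nhdsWithin_le_nhds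
  apply tendsto_of_tendsto_of_tendsto_of_le_of_le' tendsto_const_nhds hsq
  · filter_upwards [self_mem_nhdsWithin] with ε hε
    apply intervalIntegral.integral_nonneg (le_of_lt hε)
    intro s _
    exact f_nonneg j s
  · filter_upwards [self_mem_nhdsWithin] with ε hε
    have hε0 : (0:ℝ) < ε := hε
    rw [← rpow_int ε]
    apply intervalIntegral.integral_mono_on hε0.le (f_intble j ε hε0.le)
      (intervalIntegral.intervalIntegrable_rpow' (by norm_num))
    intro s hs
    rcases eq_or_lt_of_le hs.1 with h | h
    · rw [← h]
      simp
    · exact f_bound j h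

lemma inner_atTop (j : ℝ) (hj : 0 < j) :
    Filter.Tendsto (fun ε : ℝ => j / Real.sqrt ε) (nhdsWithin 0 (Set.Ioi 0)) atTop := by
  have h1 : Filter.Tendsto Real.sqrt (nhdsWithin 0 (Set.Ioi 0)) (nhdsWithin 0 (Set.Ioi 0)) := by
    rw [tendsto_nhdsWithin_iff]
    constructor
    · have := Real.continuous_sqrt.continuousAt (x := (0:ℝ)).mono_left
        (nhdsWithin_le_nhds (s := Set.Ioi (0:ℝ)))
      simpa [Real.sqrt_zero] using this
    · filter_upwards [self_mem_nhdsWithin] with ε hε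
      exact Real.sqrt_pos.mpr hε
  have h2 : Filter.Tendsto (fun ε : ℝ => (Real.sqrt ε)⁻¹) (nhdsWithin 0 (Set.Ioi 0)) atTop :=
    tendsto_inv_nhdsGT_zero.comp h1
  have h3 := h2.const_mul_atTop hj
  apply h3.congr
  intro ε
  rw [div_eq_mul_inv]

lemma front_zero (j : ℝ) (hj : 0 < j) :
    Filter.Tendsto (fun ε : ℝ => 2 * Real.sqrt ε * Real.exp (-j ^ 2 / (2 * ε)))
      (nhdsWithin 0 (Set.Ioi 0)) (nhds 0) := by
  have hsq : Filter.Tendsto (fun ε : ℝ => 2 * Real.sqrt ε) (nhdsWithin 0 (Set.Ioi 0)) (nhds 0) := by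
    have : Filter.Tendsto (fun ε : ℝ => 2 * Real.sqrt ε) (nhds 0) (nhds (2 * Real.sqrt 0)) :=
      (continuous_const.mul Real.continuous_sqrt).continuousAt
    simpa using this.mono_left nhdsWithin_le_nhds
  apply tendsto_of_tendsto_of_tendsto_of_le_of_le' tendsto_const_nhds hsq
  · filter_upwards with ε
    have h1 : (0:ℝ) ≤ 2 * Real.sqrt ε := by positivity
    exact mul_nonneg h1 (Real.exp_pos _).le
  · filter_upwards [self_mem_nhdsWithin] with ε hε
    have : Real.exp (-j ^ 2 / (2 * ε)) ≤ 1 := by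
      rw [Real.exp_le_one_iff]
      have hε' : (0:ℝ) < ε := hε
      exact div_nonpos_of_nonpos_of_nonneg (neg_nonpos.mpr (sq_nonneg j))
        (by positivity)
    calc 2 * Real.sqrt ε * Real.exp (-j ^ 2 / (2 * ε)) ≤ 2 * Real.sqrt ε * 1 :=
          mul_le_mul_of_nonneg_left this (by positivity)
      _ = 2 * Real.sqrt ε := mul_one _

theorem stmt_16 (t j : ℝ) (ht : 0 < t) (hj : 0 ≤ j) :
    ∫ s in (0:ℝ)..t, (Real.sqrt s)⁻¹ * Real.exp (-j ^ 2 / (2 * s))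
    = 2 * Real.sqrt t * Real.exp (-j ^ 2 / (2 * t)) -
        2 * j * ∫ u in Set.Ioi (j / Real.sqrt t), Real.exp (-u ^ 2 / 2) := by
  rcases hj.eq_or_lt with rfl | hj0
  · -- j = 0
    simp only [ne_eq, OfNat.ofNat_ne_zero, not_false_eq_true, zero_pow, neg_zero, zero_div,
      Real.exp_zero, mul_one, zero_mul, zero_div, sub_zero]
    have : ∀ s ∈ Set.uIcc (0:ℝ) t, (Real.sqrt s)⁻¹ = s ^ (-(1/2) : ℝ) := by
      intro s hs
      rw [Set.uIcc_of_le ht.le] at hs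
      rw [Real.sqrt_eq_rpow, ← Real.rpow_neg hs.1]
    rw [intervalIntegral.integral_congr this, rpow_int t]
    ring
  · -- j > 0
    set f : ℝ → ℝ := fun s => (Real.sqrt s)⁻¹ * Real.exp (-j ^ 2 / (2 * s)) with hf
    set F : ℝ → ℝ := fun s => 2 * Real.sqrt s * Real.exp (-j ^ 2 / (2 * s))
        + 2 * j * ∫ u in (0:ℝ)..(j / Real.sqrt s), Real.exp (-u ^ 2 / 2) with hF
    set C : ℝ := ∫ u in Set.Ioi (0:ℝ), Real.exp (-u ^ 2 / 2) with hC
    -- the two limits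
    have hIoo : Set.Ioo (0:ℝ) t ∈ nhdsWithin (0:ℝ) (Set.Ioi 0) :=
      Ioo_mem_nhdsGT_of_mem ⟨le_rfl, ht⟩
    have limit1 : Filter.Tendsto (fun ε => ∫ s in ε..t, f s) (nhdsWithin 0 (Set.Ioi 0))
        (nhds (∫ s in (0:ℝ)..t, f s)) := by
      have heq : ∀ᶠ ε in nhdsWithin (0:ℝ) (Set.Ioi 0),
          (∫ s in (0:ℝ)..t, f s) - (∫ s in (0:ℝ)..ε, f s) = ∫ s in ε..t, f s := by
        filter_upwards [hIoo] with ε hε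
        have h1 : IntervalIntegrable f MeasureTheory.volume 0 ε := by
          apply (f_intble j t ht.le).mono_set
          rw [Set.uIcc_of_le hε.1.le, Set.uIcc_of_le ht.le]
          exact Set.Icc_subset_Icc le_rfl hε.2.le
        have h2 : IntervalIntegrable f MeasureTheory.volume ε t := by
          apply (f_intble j t ht.le).mono_set
          rw [Set.uIcc_of_le hε.2.le, Set.uIcc_of_le ht.le]
          exact Set.Icc_subset_Icc hε.1.le le_rfl
        have := intervalIntegral.integral_add_adjacent_intervals h1 h2
        linarith
      apply Filter.Tendsto.congr' heq
      have := (tendsto_const_nhds (x := ∫ s in (0:ℝ)..t, f s)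
        (f := nhdsWithin (0:ℝ) (Set.Ioi 0))).sub (small_int j)
      simpa using this
    have limit2 : Filter.Tendsto (fun ε => F t - F ε) (nhdsWithin 0 (Set.Ioi 0))
        (nhds (F t - 2 * j * C)) := by
      apply Filter.Tendsto.const_sub
      have htail : Filter.Tendsto (fun ε => ∫ u in Set.Ioi (j / Real.sqrt ε),
          Real.exp (-u ^ 2 / 2)) (nhdsWithin 0 (Set.Ioi 0)) (nhds 0) :=
        tail_tendsto.comp (inner_atTop j hj0)
      have hmid : Filter.Tendsto (fun ε => 2 * j * ∫ u in (0:ℝ)..(j / Real.sqrt ε),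
          Real.exp (-u ^ 2 / 2)) (nhdsWithin 0 (Set.Ioi 0)) (nhds (2 * j * C)) := by
        have heq2 : ∀ᶠ ε in nhdsWithin (0:ℝ) (Set.Ioi 0),
            2 * j * (C - ∫ u in Set.Ioi (j / Real.sqrt ε), Real.exp (-u ^ 2 / 2))
              = 2 * j * ∫ u in (0:ℝ)..(j / Real.sqrt ε), Real.exp (-u ^ 2 / 2) := by
          filter_upwards [self_mem_nhdsWithin] with ε hε
          rw [tail_eq _ (by positivity)]
          ring
        apply Filter.Tendsto.congr' heq2
        have := (tendsto_const_nhds (x := C)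
          (f := nhdsWithin (0:ℝ) (Set.Ioi 0))).sub htail
        rw [sub_zero] at this
        exact this.const_mul (2 * j)
      have := (front_zero j hj0).add hmid
      rw [zero_add] at this
      exact this
    -- F ε equality : for ε in Ioo 0 t, ∫_ε^t f = F t - F ε
    have hkey : ∀ᶠ ε in nhdsWithin (0:ℝ) (Set.Ioi 0), (∫ s in ε..t, f s) = F t - F ε := by
      filter_upwards [hIoo] with ε hε
      apply intervalIntegral.integral_eq_sub_of_hasDerivAt
      · intro x hx
        rw [Set.uIcc_of_le hε.2.le] at hx
        exact F_deriv j x (lt_of_lt_of_le hε.1 hx.1)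
      · apply (f_intble j t ht.le).mono_set
        rw [Set.uIcc_of_le hε.2.le, Set.uIcc_of_le ht.le]
        exact Set.Icc_subset_Icc hε.1.le le_rfl
    have hmain : (∫ s in (0:ℝ)..t, f s) = F t - 2 * j * C :=
      tendsto_nhds_unique (limit1.congr' hkey) limit2
    rw [hmain, hF]
    simp only
    rw [tail_eq (j / Real.sqrt t) (by positivity)]
    ring
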